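/- For all x ∈ E and q ∈ F(S_r), the resolvent satisfies φ(q, S_r x) + φ(S_r x, x) ≤ φ(q, x). -/
import Mathlib


open Set Filter

/-- For all `x ∈ E` and `q ∈ F(S_r)`: `φ(q, S_r x) + φ(S_r x, x) ≤ φ(q, x)`. -/
theorem equilibrium_resolvent_phi_inequality
    {E : Type*} [NormedAddCommGroup E] [NormedSpace ℝ E] [CompleteSpace E]
    [StrictConvexSpace ℝ E]
    (hrefl : Function.Surjective (NormedSpace.inclusionInDoubleDual ℝ E))
    (J : E → (E →L[ℝ] ℝ))
    (hJ1 : ∀ x : E, J x x = ‖x‖ ^ 2)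
    (hJ2 : ∀ x : E, ‖J x‖ = ‖x‖)
    (φ : E → E → ℝ)
    (hφ : ∀ x y : E, φ x y = ‖x‖ ^ 2 - 2 * (J y x) + ‖y‖ ^ 2)
    (C : Set E) (hC : C.Nonempty) (hCc : IsClosed C) (hCv : Convex ℝ C)
    (F : E → E → ℝ)
    (hA1 : ∀ x ∈ C, F x x = 0)
    (hA2 : ∀ x ∈ C, ∀ y ∈ C, F x y + F y x ≤ 0)
    (hA3 : ∀ x ∈ C, ∀ y ∈ C, ∀ z ∈ C,
      Filter.limsup (fun t : ℝ => F (t • z + (1 - t) • x) y) (nhdsWithin 0 (Ioi 0))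
        ≤ F x y)
    (hA4 : ∀ x ∈ C, ConvexOn ℝ C (F x) ∧ LowerSemicontinuousOn (F x) C)
    (r : ℝ) (hr : 0 < r)
    (S : E → E)
    (hS : ∀ x : E, S x ∈ C ∧
      ∀ y ∈ C, F (S x) y + (1 / r) * ((J (S x) - J x) (y - S x)) ≥ 0) :
    ∀ x : E, ∀ q : E, S q = q → φ q (S x) + φ (S x) x ≤ φ q x := by
  intro x q hq
  have hqC : q ∈ C := by rw [← hq]; exact (hS q).1
  have hSxC : S x ∈ C := (hS x).1
  have h1 := (hS x).2 q hqC
  have h2 := (hS q).2 (S x) hSxC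
  rw [hq] at h2
  simp only [sub_self, ContinuousLinearMap.zero_apply, mul_zero, add_zero, ge_iff_le] at h2
  have hmono := hA2 (S x) hSxC q hqC
  have hFle : F (S x) q ≤ 0 := by linarith
  have hA : (0:ℝ) ≤ (J (S x) - J x) (q - S x) := by
    by_contra h
    push_neg at h
    have : (1 / r) * ((J (S x) - J x) (q - S x)) < 0 := by
      apply mul_neg_of_pos_of_neg (by positivity) h
    linarith
  have hexp : (J (S x) - J x) (q - S x)
      = J (S x) q - J (S x) (S x) - J x q + J x (S x) := by
    simp only [ContinuousLinearMap.sub_apply, map_sub]; ring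
  rw [hexp, hJ1 (S x)] at hA
  rw [hφ q (S x), hφ (S x) x, hφ q x]
  linarith
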